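/- Let r ≥ 3, let H' be the K_{r+1}^r-decomposition of a friendship r-hypergraph H, let q ∈ E(H') and z ∉ q. Then the number of edges q' ∈ E(H') with z ∈ q' and |q' ∩ q| = r−1 is at most ⌊(r+1)(3r−4)/6⌋. -/

import Mathlib

theorem stmt_14 {V : Type*} [Fintype V] [DecidableEq V] (r : ℕ) (hr : 3 ≤ r)
    (H : Finset (Finset V)) (huniform : ∀ e ∈ H, e.card = r)
    (hfriend : ∀ R : Finset V, R.card = r →
      ∃! x : V, x ∉ R ∧ ∀ A ⊆ R, A.card = r - 1 → insert x A ∈ H)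
    (H' : Finset (Finset V))
    (hH' : H' = Finset.univ.powerset.filter (fun S : Finset V => S.card = r + 1 ∧
      ∀ f ∈ S.powerset, f.card = r → f ∈ H))
    (q : Finset V) (hq : q ∈ H') (z : V) (hz : z ∉ q) :
    (H'.filter (fun q' => z ∈ q' ∧ (q' ∩ q).card = r - 1)).card ≤
      (r + 1) * (3 * r - 4) / 6 := by
  classical
  have hmemE : ∀ s : Finset V, s ∈ H' ↔ s.card = r + 1 ∧ ∀ f ⊆ s, f.card = r → f ∈ H := by
    intro s
    simp [hH', Finset.mem_filter, Finset.mem_powerset]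
  obtain ⟨hqcard, hqsub⟩ := (hmemE q).mp hq
  have huniq : ∀ R : Finset V, R.card = r → ∀ x y : V,
      (x ∉ R ∧ ∀ A ⊆ R, A.card = r - 1 → insert x A ∈ H) →
      (y ∉ R ∧ ∀ A ⊆ R, A.card = r - 1 → insert y A ∈ H) → x = y :=
    fun R hR x y hx hy => (hfriend R hR).unique hx hy
  -- Step A : injection into good pairs
  have hinjA : (H'.filter (fun q' => z ∈ q' ∧ (q' ∩ q).card = r - 1)).card ≤
      ((q.powersetCard 2).filter (fun p => insert z (q \ p) ∈ H)).card := by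
      apply Finset.card_le_card_of_injOn (fun q' => q \ q')
      · intro q' hq'
        rw [Finset.mem_coe, Finset.mem_filter] at hq'
        obtain ⟨hq'E, hzq', hcap⟩ := hq'
        obtain ⟨hq'c, hq'sub⟩ := (hmemE q').mp hq'E
        have hiq : (q ∩ q').card = r - 1 := by rw [Finset.inter_comm]; exact hcap
        have h0 := Finset.card_sdiff_add_card_inter q q'
        rw [hqcard, hiq] at h0
        have hsd2 : (q \ q').card = 2 := by omega
        rw [Finset.mem_coe, Finset.mem_filter, Finset.mem_powersetCard]
        refine ⟨⟨Finset.sdiff_subset, hsd2⟩, ?_⟩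
        rw [Finset.sdiff_sdiff_self_left]
        refine hq'sub _ ?_ ?_
        · exact Finset.insert_subset hzq' Finset.inter_subset_right
        · have hzi : z ∉ q ∩ q' := fun h => hz (Finset.mem_inter.mp h).1
          rw [Finset.card_insert_of_notMem hzi, hiq]; omega
      · intro q1 h1 q2 h2 heq
        simp only [Finset.coe_filter, Set.mem_setOf_eq] at h1 h2
        obtain ⟨h1E, hz1, hc1⟩ := h1
        obtain ⟨h2E, hz2, hc2⟩ := h2
        obtain ⟨h1c, h1sub⟩ := (hmemE q1).mp h1E
        obtain ⟨h2c, h2sub⟩ := (hmemE q2).mp h2E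
        have heq' : q \ q1 = q \ q2 := heq
        have hearly : q ∩ q1 = q ∩ q2 := by
          rw [← Finset.sdiff_sdiff_self_left q q1, ← Finset.sdiff_sdiff_self_left q q2, heq']
        set S := q ∩ q1 with hS
        have hScard : S.card = r - 1 := by rw [hS, Finset.inter_comm]; exact hc1
        have hzS : z ∉ S := fun h => hz (Finset.mem_inter.mp h).1
        have hRcard : (insert z S).card = r := by
          rw [Finset.card_insert_of_notMem hzS, hScard]; omega
        have hext : ∀ Q : Finset V, Q.card = r + 1 → (∀ f ⊆ Q, f.card = r → f ∈ H) →
            z ∈ Q → q ∩ Q = S → ∃ x, Q = insert x (insert z S) ∧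
            (x ∉ insert z S ∧ ∀ A ⊆ insert z S, A.card = r - 1 → insert x A ∈ H) := by
          intro Q hQc hQsub hzQ hQS
          have hRQ : insert z S ⊆ Q := by
            refine Finset.insert_subset hzQ ?_
            rw [← hQS]; exact Finset.inter_subset_right
          have hone : (Q \ insert z S).card = 1 := by
            rw [Finset.card_sdiff_of_subset hRQ, hQc, hRcard]; omega
          obtain ⟨x, hx⟩ := Finset.card_eq_one.mp hone
          have hxmem : x ∈ Q \ insert z S := by rw [hx]; exact Finset.mem_singleton_self x
          obtain ⟨hxQ, hxR⟩ := Finset.mem_sdiff.mp hxmem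
          refine ⟨x, ?_, hxR, ?_⟩
          · have h := Finset.union_sdiff_of_subset hRQ
            rw [hx, Finset.union_comm, ← Finset.insert_eq] at h
            exact h.symm
          · intro A hA hAcard
            have hxA : x ∉ A := fun h => hxR (hA h)
            refine hQsub _ ?_ ?_
            · exact Finset.insert_subset hxQ (hA.trans hRQ)
            · rw [Finset.card_insert_of_notMem hxA, hAcard]; omega
        obtain ⟨x1, hQ1, hP1⟩ := hext q1 h1c h1sub hz1 hS.symm
        obtain ⟨x2, hQ2, hP2⟩ := hext q2 h2c h2sub hz2 (hearly ▸ hS.symm)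
        rw [hQ1, hQ2, huniq (insert z S) hRcard x1 x2 hP1 hP2]
  -- Step B : every vertex of q lies in a bad pair
  have hB1 : ∀ a ∈ q, ∃ p ∈ (q.powersetCard 2).filter (fun p => insert z (q \ p) ∉ H), a ∈ p := by
      intro a ha
      by_contra hcon
      push_neg at hcon
      have hRa : (q.erase a).card = r := by
        rw [Finset.card_erase_of_mem ha, hqcard]; omega
      have hPa : a ∉ q.erase a ∧ ∀ A ⊆ q.erase a, A.card = r - 1 → insert a A ∈ H := by
        refine ⟨Finset.notMem_erase a q, ?_⟩
        intro A hA hAcard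
        have haA : a ∉ A := fun h => Finset.notMem_erase a q (hA h)
        refine hqsub _ ?_ ?_
        · exact Finset.insert_subset ha (hA.trans (Finset.erase_subset a q))
        · rw [Finset.card_insert_of_notMem haA, hAcard]; omega
      have hPz : z ∉ q.erase a ∧ ∀ A ⊆ q.erase a, A.card = r - 1 → insert z A ∈ H := by
        refine ⟨fun h => hz (Finset.erase_subset a q h), ?_⟩
        intro A hA hAcard
        have hbex : ((q.erase a) \ A).card = 1 := by
          rw [Finset.card_sdiff_of_subset hA, hRa, hAcard]; omega
        obtain ⟨b, hb⟩ := Finset.card_eq_one.mp hbex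
        have hbmem : b ∈ q.erase a \ A := by rw [hb]; exact Finset.mem_singleton_self b
        obtain ⟨hbqa, hbA⟩ := Finset.mem_sdiff.mp hbmem
        have hbq : b ∈ q := Finset.erase_subset a q hbqa
        have hba : b ≠ a := Finset.ne_of_mem_erase hbqa
        have hpP : ({a, b} : Finset V) ∈ q.powersetCard 2 := by
          rw [Finset.mem_powersetCard]
          exact ⟨Finset.insert_subset ha (Finset.singleton_subset_iff.mpr hbq),
            Finset.card_pair hba.symm⟩
        have hgood : insert z (q \ ({a, b} : Finset V)) ∈ H := by
          by_contra h'
          exact hcon {a, b} (Finset.mem_filter.mpr ⟨hpP, h'⟩) (Finset.mem_insert_self a {b})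
        have hAeq : A = q \ ({a, b} : Finset V) := by
          apply Finset.eq_of_subset_of_card_le
          · intro x hx
            rw [Finset.mem_sdiff]
            refine ⟨Finset.erase_subset a q (hA hx), ?_⟩
            simp only [Finset.mem_insert, Finset.mem_singleton, not_or]
            exact ⟨fun h => Finset.notMem_erase a q (h ▸ hA hx), fun h => hbA (h ▸ hx)⟩
          · have hsub2 : ({a, b} : Finset V) ⊆ q :=
              Finset.insert_subset ha (Finset.singleton_subset_iff.mpr hbq)
            rw [Finset.card_sdiff_of_subset hsub2, Finset.card_pair hba.symm, hqcard, hAcard]; omega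
        rw [hAeq]
        exact hgood
      have : a = z := huniq _ hRa a z hPa hPz
      exact hz (this ▸ ha)
  -- Step C : every pair is met by a distinct bad pair
  have hC : ∀ p ∈ q.powersetCard 2,
      ∃ p' ∈ (q.powersetCard 2).filter (fun p => insert z (q \ p) ∉ H),
      p' ≠ p ∧ (p ∩ p').Nonempty := by
      have hkey : ∀ p ∈ q.powersetCard 2,
          (∀ p' ∈ (q.powersetCard 2).filter (fun p => insert z (q \ p) ∉ H),
            p' ≠ p → ¬(p ∩ p').Nonempty) →
          ∀ c d : V, c ≠ d → p = {c, d} →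
          (c ∉ insert z (q \ p) ∧ ∀ A ⊆ insert z (q \ p), A.card = r - 1 → insert c A ∈ H) := by
        intro p hp hcon c d hcd hpcd
        obtain ⟨hpq, hp2⟩ := Finset.mem_powersetCard.mp hp
        have hcp : c ∈ p := by rw [hpcd]; exact Finset.mem_insert_self c {d}
        have hdp : d ∈ p := by rw [hpcd]; simp
        have hcq : c ∈ q := hpq hcp
        have hdq : d ∈ q := hpq hdp
        have hsd : (q \ p).card = r - 1 := by
          rw [Finset.card_sdiff_of_subset hpq, hp2, hqcard]; omega
        constructor
        · simp only [Finset.mem_insert, Finset.mem_sdiff, not_or]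
          exact ⟨fun h => hz (h ▸ hcq), fun h => h.2 hcp⟩
        intro A hA hAcard
        by_cases hzA : z ∈ A
        · set A' := A.erase z with hA'def
          have hA'sub : A' ⊆ q \ p := by
            intro x hx
            obtain ⟨hxz, hxA⟩ := Finset.mem_erase.mp hx
            rcases Finset.mem_insert.mp (hA hxA) with h | h
            · exact absurd h hxz
            · exact h
          have hA'card : A'.card = r - 2 := by
            rw [hA'def, Finset.card_erase_of_mem hzA, hAcard]; omega
          have hwcard : ((q \ p) \ A').card = 1 := by
            rw [Finset.card_sdiff_of_subset hA'sub, hsd, hA'card]; omega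
          obtain ⟨w, hw⟩ := Finset.card_eq_one.mp hwcard
          have hwmem : w ∈ (q \ p) \ A' := by rw [hw]; exact Finset.mem_singleton_self w
          obtain ⟨hwqp, hwA'⟩ := Finset.mem_sdiff.mp hwmem
          obtain ⟨hwq, hwp⟩ := Finset.mem_sdiff.mp hwqp
          have hwd : w ≠ d := fun h => hwp (h ▸ hdp)
          have hwc : w ≠ c := fun h => hwp (h ▸ hcp)
          have hp'P : ({d, w} : Finset V) ∈ q.powersetCard 2 := by
            rw [Finset.mem_powersetCard]
            exact ⟨Finset.insert_subset hdq (Finset.singleton_subset_iff.mpr hwq),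
              Finset.card_pair (Ne.symm hwd)⟩
          have hp'ne : ({d, w} : Finset V) ≠ p := by
            intro h
            exact hwp (h ▸ (by simp : w ∈ ({d, w} : Finset V)))
          have hp'cap : (p ∩ ({d, w} : Finset V)).Nonempty :=
            ⟨d, Finset.mem_inter.mpr ⟨hdp, by simp⟩⟩
          have hp'good : insert z (q \ ({d, w} : Finset V)) ∈ H := by
            by_contra h'
            exact hcon {d, w} (Finset.mem_filter.mpr ⟨hp'P, h'⟩) hp'ne hp'cap
          have hp'subq : ({d, w} : Finset V) ⊆ q :=
            Finset.insert_subset hdq (Finset.singleton_subset_iff.mpr hwq)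
          have hceq : insert c A' = q \ ({d, w} : Finset V) := by
            apply Finset.eq_of_subset_of_card_le
            · intro x hx
              rcases Finset.mem_insert.mp hx with h | h
              · subst h
                rw [Finset.mem_sdiff]
                refine ⟨hcq, ?_⟩
                simp only [Finset.mem_insert, Finset.mem_singleton, not_or]
                exact ⟨hcd, Ne.symm hwc⟩
              · have hx' := Finset.mem_sdiff.mp (hA'sub h)
                rw [Finset.mem_sdiff]
                refine ⟨hx'.1, ?_⟩
                simp only [Finset.mem_insert, Finset.mem_singleton, not_or]
                exact ⟨fun hh => hx'.2 (hh ▸ hdp), fun hh => hwA' (hh ▸ h)⟩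
            · have h1 : (q \ ({d, w} : Finset V)).card = r - 1 := by
                rw [Finset.card_sdiff_of_subset hp'subq, Finset.card_pair (Ne.symm hwd), hqcard]; omega
              have hcA' : c ∉ A' := fun h => (Finset.mem_sdiff.mp (hA'sub h)).2 hcp
              rw [h1, Finset.card_insert_of_notMem hcA', hA'card]; omega
          have hArw : A = insert z A' := (Finset.insert_erase hzA).symm
          rw [hArw, Finset.insert_comm, hceq]
          exact hp'good
        · have hAsub : A ⊆ q \ p := by
            intro x hx
            rcases Finset.mem_insert.mp (hA hx) with h | h
            · exact absurd (h ▸ hx) hzA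
            · exact h
          have hAeq : A = q \ p := Finset.eq_of_subset_of_card_le hAsub (by rw [hsd, hAcard])
          have hcA : c ∉ A := by rw [hAeq]; simp [hcp]
          refine hqsub _ ?_ ?_
          · rw [hAeq]; exact Finset.insert_subset hcq Finset.sdiff_subset
          · rw [Finset.card_insert_of_notMem hcA, hAcard]; omega
      intro p hp
      by_contra hcon
      push_neg at hcon
      obtain ⟨a, b, hab, hpab⟩ := Finset.card_eq_two.mp (Finset.mem_powersetCard.mp hp).2
      have hRc : (insert z (q \ p)).card = r := by
        have hzqp : z ∉ q \ p := fun h => hz (Finset.mem_sdiff.mp h).1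
        rw [Finset.card_insert_of_notMem hzqp,
          Finset.card_sdiff_of_subset (Finset.mem_powersetCard.mp hp).1,
          (Finset.mem_powersetCard.mp hp).2, hqcard]
        omega
      have h1 := hkey p hp (fun p' hp' hne => Finset.not_nonempty_iff_eq_empty.mpr (hcon p' hp' hne)) a b hab hpab
      have h2 := hkey p hp (fun p' hp' hne => Finset.not_nonempty_iff_eq_empty.mpr (hcon p' hp' hne)) b a hab.symm (by rw [hpab, Finset.pair_comm])
      exact hab (huniq _ hRc a b h1 h2)
  -- Step D : 2(r+1) ≤ 3|Bad|
  have hBlb : 2 * (r + 1) ≤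
      3 * ((q.powersetCard 2).filter (fun p => insert z (q \ p) ∉ H)).card := by
    have hBadP : (q.powersetCard 2).filter (fun p => insert z (q \ p) ∉ H) ⊆ q.powersetCard 2 :=
      Finset.filter_subset _ _
    set Bad := (q.powersetCard 2).filter (fun p => insert z (q \ p) ∉ H) with hBadDef
    have hsumdeg : ∑ v ∈ q, (Bad.filter (fun p => v ∈ p)).card = 2 * Bad.card := by
      have h1 : ∀ v : V, (Bad.filter (fun p => v ∈ p)).card = ∑ p ∈ Bad, if v ∈ p then 1 else 0 :=
        fun v => Finset.card_filter _ _
      simp_rw [h1]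
      rw [Finset.sum_comm]
      have h2 : ∀ p ∈ Bad, (∑ v ∈ q, if v ∈ p then 1 else 0) = 2 := by
        intro p hp
        obtain ⟨hpq, hp2⟩ := Finset.mem_powersetCard.mp (hBadP hp)
        rw [← Finset.card_filter]
        have : q.filter (fun v => v ∈ p) = p := by
          ext x
          simp only [Finset.mem_filter]
          exact ⟨fun h => h.2, fun h => ⟨hpq h, h⟩⟩
        rw [this, hp2]
      rw [Finset.sum_congr rfl h2, Finset.sum_const, smul_eq_mul, mul_comm]
    by_contra hlt
    push_neg at hlt
    have hdegpos : ∀ v ∈ q, 1 ≤ (Bad.filter (fun p => v ∈ p)).card := by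
      intro v hv
      obtain ⟨p, hpB, hvp⟩ := hB1 v hv
      exact Finset.card_pos.mpr ⟨p, Finset.mem_filter.mpr ⟨hpB, hvp⟩⟩
    have hsplit := Finset.sum_filter_add_sum_filter_not q
      (fun v => (Bad.filter (fun p => v ∈ p)).card = 1) (fun v => (Bad.filter (fun p => v ∈ p)).card)
    have hs1 : ∑ v ∈ q.filter (fun v => (Bad.filter (fun p => v ∈ p)).card = 1),
        (Bad.filter (fun p => v ∈ p)).card
        = (q.filter (fun v => (Bad.filter (fun p => v ∈ p)).card = 1)).card := by
      rw [Finset.sum_congr rfl (fun v hv => (Finset.mem_filter.mp hv).2)]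
      simp
    have hs2 : 2 * (q.filter (fun v => ¬(Bad.filter (fun p => v ∈ p)).card = 1)).card ≤
        ∑ v ∈ q.filter (fun v => ¬(Bad.filter (fun p => v ∈ p)).card = 1),
          (Bad.filter (fun p => v ∈ p)).card := by
      rw [mul_comm, ← smul_eq_mul]
      apply Finset.card_nsmul_le_sum
      intro x hx
      obtain ⟨hxq, hxne⟩ := Finset.mem_filter.mp hx
      have := hdegpos x hxq
      omega
    have hcards := Finset.card_filter_add_card_filter_not
      (s := q) (p := fun v => (Bad.filter (fun p => v ∈ p)).card = 1)
    rw [hqcard] at hcards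
    have hD1big : Bad.card <
        (q.filter (fun v => (Bad.filter (fun p => v ∈ p)).card = 1)).card := by omega
    set D1 := q.filter (fun v => (Bad.filter (fun p => v ∈ p)).card = 1) with hD1
    have hmaps : ∀ v ∈ D1,
        (fun v => if h : (Bad.filter (fun p => v ∈ p)).Nonempty then h.choose else (∅ : Finset V)) v
        ∈ Bad := by
      intro v hv
      have h1 : (Bad.filter (fun p => v ∈ p)).card = 1 := (Finset.mem_filter.mp hv).2
      have hne : (Bad.filter (fun p => v ∈ p)).Nonempty := Finset.card_pos.mp (by omega)
      simp only [dif_pos hne]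
      exact (Finset.mem_filter.mp hne.choose_spec).1
    obtain ⟨x, hx, y, hy, hxy, hfeq⟩ := Finset.exists_ne_map_eq_of_card_lt_of_maps_to hD1big hmaps
    have hfspec : ∀ v ∈ D1,
        (if h : (Bad.filter (fun p => v ∈ p)).Nonempty then h.choose else (∅ : Finset V))
        ∈ Bad ∧ v ∈
        (if h : (Bad.filter (fun p => v ∈ p)).Nonempty then h.choose else (∅ : Finset V)) := by
      intro v hv
      have h1 : (Bad.filter (fun p => v ∈ p)).card = 1 := (Finset.mem_filter.mp hv).2
      have hne : (Bad.filter (fun p => v ∈ p)).Nonempty := Finset.card_pos.mp (by omega)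
      simp only [dif_pos hne]
      exact ⟨(Finset.mem_filter.mp hne.choose_spec).1, (Finset.mem_filter.mp hne.choose_spec).2⟩
    obtain ⟨heB, hxe⟩ := hfspec x hx
    obtain ⟨-, hye⟩ := hfspec y hy
    rw [← hfeq] at hye
    set e := (if h : (Bad.filter (fun p => x ∈ p)).Nonempty then h.choose
      else (∅ : Finset V)) with he
    obtain ⟨heq', he2⟩ := Finset.mem_powersetCard.mp (hBadP heB)
    have hexy : e = {x, y} := by
      refine (Finset.eq_of_subset_of_card_le
        (Finset.insert_subset hxe (Finset.singleton_subset_iff.mpr hye)) ?_).symm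
      rw [he2, Finset.card_pair hxy]
    obtain ⟨p', hp'B, hp'ne, v, hv⟩ := hC e (hBadP heB)
    obtain ⟨hve, hvp'⟩ := Finset.mem_inter.mp hv
    have hvD1 : v ∈ D1 := by
      have hve' := hve
      rw [hexy] at hve'
      rcases Finset.mem_insert.mp hve' with h | h
      · exact h ▸ hx
      · exact (Finset.mem_singleton.mp h) ▸ hy
    have hdv : (Bad.filter (fun p => v ∈ p)).card = 1 := (Finset.mem_filter.mp hvD1).2
    have h2lt : 1 < (Bad.filter (fun p => v ∈ p)).card := by
      apply Finset.one_lt_card.mpr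
      exact ⟨e, Finset.mem_filter.mpr ⟨heB, hve⟩, p', Finset.mem_filter.mpr ⟨hp'B, hvp'⟩,
        fun h => hp'ne h.symm⟩
    omega
  -- Final counting
  have hGB : ((q.powersetCard 2).filter (fun p => insert z (q \ p) ∈ H)).card +
      ((q.powersetCard 2).filter (fun p => insert z (q \ p) ∉ H)).card
      = (q.powersetCard 2).card :=
    Finset.card_filter_add_card_filter_not _
  have hPc : 2 * (q.powersetCard 2).card = (r + 1) * r := by
    rw [Finset.card_powersetCard, hqcard, Nat.choose_two_right, Nat.add_sub_cancel]
    exact Nat.mul_div_cancel' (by rw [Nat.mul_comm]; exact (Nat.even_mul_succ_self r).two_dvd)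
  rw [Nat.le_div_iff_mul_le (by norm_num : 0 < 6)]
  have hkey2 : (r + 1) * (3 * r - 4) + 4 * r + 4 = 3 * ((r + 1) * r) := by
    have h4 : 4 ≤ 3 * r := by omega
    have h1 : (r + 1) * (3 * r - 4) + (r + 1) * 4 = (r + 1) * (3 * r) := by
      rw [← Nat.mul_add, Nat.sub_add_cancel h4]
    have h2 : (r + 1) * (3 * r) = 3 * ((r + 1) * r) := by ring
    omega
  generalize hX : (r + 1) * (3 * r - 4) = X at hkey2 ⊢
  generalize hW : (r + 1) * r = W at hkey2 hPc
  omega
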